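/- For all n ≥ 2, μ*(n,2) = 2·⌈n/3⌉, where μ*(n,2) is the minimum over all n×n matrices W over 𝔽₂ with all diagonal entries 1 and each column having Hamming weight exactly 2, of the maximum over x ∈ 𝔽₂ⁿ of the Hamming weight of W·x. In particular μ*(n,2) is the least even integer ≥ ⌈2n/3⌉. -/

import Mathlib

def sigAux (o i : ℕ) : ℕ :=
  if i < o then (if i % 2 = 0 then i + 1 else i - 1)
  else (if (i - o) % 3 = 2 then i - 2 else i + 1)

def tauAux (o i : ℕ) : ℕ :=
  if i < o then (if i % 2 = 0 then i + 1 else i - 1)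
  else (if (i - o) % 3 = 0 then i + 2 else i - 1)

def betaAux (p i : ℕ) : ℕ := if i < 2 * p then i / 2 else p + (i - 2 * p) / 3

variable {n p i : ℕ}

lemma sig_lt (hp : 2 * p ≤ n) (hd : 3 ∣ (n - 2 * p)) (hi : i < n) : sigAux (2 * p) i < n := by
  unfold sigAux; split_ifs <;> omega

lemma sig_ne (hp : 2 * p ≤ n) (hd : 3 ∣ (n - 2 * p)) (hi : i < n) : sigAux (2 * p) i ≠ i := by
  unfold sigAux; split_ifs <;> omega

lemma tau_lt (hp : 2 * p ≤ n) (hd : 3 ∣ (n - 2 * p)) (hi : i < n) : tauAux (2 * p) i < n := by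
  unfold tauAux; split_ifs <;> omega

lemma tau_sig (hp : 2 * p ≤ n) (hd : 3 ∣ (n - 2 * p)) (hi : i < n) :
    tauAux (2 * p) (sigAux (2 * p) i) = i := by
  unfold sigAux tauAux; split_ifs <;> omega

lemma sig_tau (hp : 2 * p ≤ n) (hd : 3 ∣ (n - 2 * p)) (hi : i < n) :
    sigAux (2 * p) (tauAux (2 * p) i) = i := by
  unfold sigAux tauAux; split_ifs <;> omega

lemma beta_sig (hp : 2 * p ≤ n) (hd : 3 ∣ (n - 2 * p)) (hi : i < n) :
    betaAux p (sigAux (2 * p) i) = betaAux p i := by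
  unfold sigAux betaAux; split_ifs <;> omega

lemma beta_tau (hp : 2 * p ≤ n) (hd : 3 ∣ (n - 2 * p)) (hi : i < n) :
    betaAux p (tauAux (2 * p) i) = betaAux p i := by
  unfold tauAux betaAux; split_ifs <;> omega

lemma beta_lt (hp : 2 * p ≤ n) (hd : 3 ∣ (n - 2 * p)) (hi : i < n) :
    betaAux p i < p + (n - 2 * p) / 3 := by
  unfold betaAux; split_ifs <;> omega

lemma beta_fiber_small {b : ℕ} (hb : b < p) (h : betaAux p i = b) : i = 2*b ∨ i = 2*b+1 := by
  unfold betaAux at h; split_ifs at h <;> omega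

lemma beta_fiber_big {b : ℕ} (hb : p ≤ b) (h : betaAux p i = b) :
    i = 2*p + 3*(b-p) ∨ i = 2*p + 3*(b-p) + 1 ∨ i = 2*p + 3*(b-p) + 2 := by
  unfold betaAux at h; split_ifs at h <;> omega
open Finset

lemma zmod2_ne_zero {a : ZMod 2} (h : a ≠ 0) : a = 1 := by revert h; revert a; decide

lemma card_triple_le (a b c : ℕ) : ({a, b, c} : Finset ℕ).card ≤ 3 := by
  apply (Finset.card_insert_le _ _).trans
  apply Nat.succ_le_succ
  apply (Finset.card_insert_le _ _).trans
  simp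

section upper
variable {n : ℕ}

lemma upper_bound (hn : 2 ≤ n) :
    ∃ W : Matrix (Fin n) (Fin n) (ZMod 2),
      (∀ i, W i i = 1) ∧ (∀ j, hammingNorm (fun i => W i j) = 2) ∧
      ∀ x : Fin n → ZMod 2, hammingNorm (Matrix.mulVec W x) ≤ 2 * ((n + 2) / 3) := by
  classical
  set p : ℕ := (3 - n % 3) % 3 with hpdef
  have hp : 2 * p ≤ n := by omega
  have hd : 3 ∣ (n - 2 * p) := by omega
  set σF : Fin n → Fin n := fun j => ⟨sigAux (2*p) j, sig_lt hp hd j.isLt⟩ with hσdef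
  set τF : Fin n → Fin n := fun j => ⟨tauAux (2*p) j, tau_lt hp hd j.isLt⟩ with hτdef
  have hστ : ∀ i, σF (τF i) = i := fun i => Fin.ext (sig_tau hp hd i.isLt)
  have hτσ : ∀ i, τF (σF i) = i := fun i => Fin.ext (tau_sig hp hd i.isLt)
  have hne : ∀ i, σF i ≠ i := fun i h => sig_ne hp hd i.isLt (congrArg Fin.val h)
  set W : Matrix (Fin n) (Fin n) (ZMod 2) :=
    fun i j => (if i = j then 1 else 0) + (if i = σF j then 1 else 0) with hWdef
  have hβσ : ∀ j : Fin n, betaAux p (σF j).val = betaAux p j.val :=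
    fun j => beta_sig hp hd j.isLt
  have hβτ : ∀ j : Fin n, betaAux p (τF j).val = betaAux p j.val :=
    fun j => beta_tau hp hd j.isLt
  refine ⟨W, ?_, ?_, ?_⟩
  · intro i
    simp [hWdef, (hne i).symm]
  · intro j
    show (univ.filter fun i => W i j ≠ 0).card = 2
    have hset : (univ.filter fun i => W i j ≠ 0) = {j, σF j} := by
      ext i
      simp only [mem_filter, mem_univ, true_and, mem_insert, mem_singleton]
      constructor
      · intro h
        by_contra hc
        push_neg at hc
        simp [hWdef, hc.1, hc.2] at h
      · rintro (rfl | rfl)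
        · simp [hWdef, (hne i).symm]
        · simp [hWdef, hne j]
    rw [hset, Finset.card_insert_of_notMem (by simp [(hne j).symm, Ne.symm]), card_singleton]
  · intro x
    have hiff : ∀ (i j : Fin n), (i = σF j) = (j = τF i) := by
      intro i j
      refine propext ⟨fun h => ?_, fun h => ?_⟩
      · rw [h, hτσ]
      · rw [h, hστ]
    have hmv : ∀ i : Fin n, W.mulVec x i = x i + x (τF i) := by
      intro i
      unfold Matrix.mulVec dotProduct
      simp only [hWdef, add_mul, ite_mul, one_mul, zero_mul]
      rw [Finset.sum_add_distrib]
      simp only [hiff]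
      rw [Finset.sum_ite_eq univ i x, Finset.sum_ite_eq' univ (τF i) x]
      simp
    set v : Fin n → ZMod 2 := fun j => x (σF j) + x j with hv
    have hcount : hammingNorm (W.mulVec x) = (univ.filter fun j => v j ≠ 0).card := by
      show (univ.filter fun i => W.mulVec x i ≠ 0).card = _
      apply Finset.card_nbij' τF σF
      · intro i hi
        simp only [mem_coe, mem_filter, mem_univ, true_and] at hi ⊢
        rw [hv]
        simpa [hστ, hmv i] using hi
      · intro j hj
        simp only [mem_coe, mem_filter, mem_univ, true_and] at hj ⊢
        rw [hmv (σF j), hτσ]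
        exact hj
      · intro i _; exact hστ i
      · intro j _; exact hτσ j
    rw [hcount]
    set B := p + (n - 2*p)/3 with hB
    have hmaps : ∀ j : Fin n, j ∈ (univ.filter fun j => v j ≠ 0) →
        betaAux p j.val ∈ Finset.range B := fun j _ => mem_range.2 (beta_lt hp hd j.isLt)
    rw [Finset.card_eq_sum_card_fiberwise hmaps]
    have hfiber : ∀ b ∈ Finset.range B,
        ((univ.filter fun j => v j ≠ 0).filter fun j : Fin n => betaAux p j.val = b).card ≤ 2 := by
      intro b _
      by_cases hbp : b < p
      · have hle : ((univ.filter fun j => v j ≠ 0).filter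
            fun j : Fin n => betaAux p j.val = b).card ≤ ({2*b, 2*b+1} : Finset ℕ).card := by
          refine Finset.card_le_card_of_injOn (fun j => (j : ℕ)) ?_ ?_
          · intro j hj
            simp only [mem_coe, mem_filter] at hj
            have := beta_fiber_small hbp hj.2
            simp only [mem_coe, mem_insert, mem_singleton]
            omega
          · intro a _ c _ h; exact Fin.ext h
        refine hle.trans ?_
        apply (Finset.card_insert_le _ _).trans
        simp
      · -- even count argument
        set Fb := (univ.filter fun j : Fin n => betaAux p j.val = b) with hFb
        have hseteq : ((univ.filter fun j => v j ≠ 0).filter fun j : Fin n => betaAux p j.val = b)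
            = Fb.filter (fun j => v j ≠ 0) := by
          ext j; simp only [mem_filter, mem_univ, true_and, hFb]; tauto
        rw [hseteq]
        have hsum0 : (∑ j ∈ Fb, v j) = 0 := by
          have h1 : (∑ j ∈ Fb, x (σF j)) = ∑ j ∈ Fb, x j := by
            apply Finset.sum_nbij' σF τF
            · intro a ha
              simp only [hFb, mem_filter, mem_univ, true_and] at ha ⊢
              rw [hβσ]; exact ha
            · intro a ha
              simp only [hFb, mem_filter, mem_univ, true_and] at ha ⊢
              rw [hβτ]; exact ha
            · intro a _; exact hτσ a
            · intro a _; exact hστ a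
            · intro a _; rfl
          calc (∑ j ∈ Fb, v j) = (∑ j ∈ Fb, x (σF j)) + ∑ j ∈ Fb, x j :=
                Finset.sum_add_distrib
            _ = (∑ j ∈ Fb, x j) + ∑ j ∈ Fb, x j := by rw [h1]
            _ = 0 := CharTwo.add_self_eq_zero _
        have hcast : (((Fb.filter fun j => v j ≠ 0).card : ZMod 2)) = 0 := by
          have : (∑ j ∈ Fb.filter (fun j => v j ≠ 0), v j) = 0 := by
            rw [Finset.sum_filter_ne_zero, hsum0]
          rw [Finset.sum_congr rfl (fun j hj => zmod2_ne_zero (mem_filter.1 hj).2)] at this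
          simpa using this
        have hdvd : 2 ∣ (Fb.filter fun j => v j ≠ 0).card :=
          (ZMod.natCast_eq_zero_iff _ 2).1 hcast
        have hle3 : (Fb.filter fun j => v j ≠ 0).card ≤ 3 := by
          have hle : (Fb.filter fun j => v j ≠ 0).card ≤
              ({2*p + 3*(b-p), 2*p + 3*(b-p) + 1, 2*p + 3*(b-p) + 2} : Finset ℕ).card := by
            refine Finset.card_le_card_of_injOn (fun j => (j : ℕ)) ?_ ?_
            · intro j hj
              simp only [hFb, mem_coe, mem_filter, mem_univ, true_and] at hj
              have := beta_fiber_big (not_lt.1 hbp) hj.1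
              simp only [mem_coe, mem_insert, mem_singleton]
              omega
            · intro a _ c _ h; exact Fin.ext h
          exact hle.trans (card_triple_le _ _ _)
        omega
    calc (∑ b ∈ Finset.range B,
          ((univ.filter fun j => v j ≠ 0).filter fun j : Fin n => betaAux p j.val = b).card)
        ≤ ∑ _b ∈ Finset.range B, 2 := Finset.sum_le_sum hfiber
      _ = 2 * B := by simp [mul_comm]
      _ = 2 * ((n + 2) / 3) := by omega

end upper
open Finset

section lower
variable {n : ℕ}

lemma lower_bound (hn : 1 ≤ n) (W : Matrix (Fin n) (Fin n) (ZMod 2))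
    (hdiag : ∀ i, W i i = 1) (hcol : ∀ j, hammingNorm (fun i => W i j) = 2) :
    2 * ((n + 2) / 3) ≤ Finset.univ.sup fun x : Fin n → ZMod 2 => hammingNorm (W.mulVec x) := by
  classical
  -- extract the off-diagonal support function f
  have hex : ∀ j : Fin n, ∃ a : Fin n, a ≠ j ∧ (∀ i, W i j ≠ 0 ↔ (i = j ∨ i = a)) := by
    intro j
    have hc : (univ.filter fun i => W i j ≠ 0).card = 2 := hcol j
    have hj : j ∈ univ.filter fun i => W i j ≠ 0 := by simp [hdiag j]
    have h1 : ((univ.filter fun i => W i j ≠ 0).erase j).card = 1 := by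
      rw [Finset.card_erase_of_mem hj, hc]
    obtain ⟨a, ha⟩ := Finset.card_eq_one.1 h1
    have haj : a ≠ j := by
      have : a ∈ (univ.filter fun i => W i j ≠ 0).erase j := ha ▸ mem_singleton_self a
      exact Finset.ne_of_mem_erase this
    have haW : W a j ≠ 0 := by
      have : a ∈ (univ.filter fun i => W i j ≠ 0).erase j := ha ▸ mem_singleton_self a
      have := Finset.mem_of_mem_erase this
      simpa using this
    refine ⟨a, haj, fun i => ⟨fun h => ?_, fun h => ?_⟩⟩
    · by_cases hij : i = j
      · exact Or.inl hij
      · right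
        have hi : i ∈ (univ.filter fun i => W i j ≠ 0).erase j := by
          simp [Finset.mem_erase, hij, h]
        rw [ha] at hi
        exact Finset.mem_singleton.1 hi
    · rcases h with rfl | rfl
      · simp [hdiag i]
      · exact haW
  choose f hfne hfsupp using hex
  -- columns of W
  have hcolid : ∀ j, (W.transpose j) = (Pi.single j 1 + Pi.single (f j) 1 : Fin n → ZMod 2) := by
    intro j; funext i
    simp only [Matrix.transpose_apply, Pi.add_apply, Pi.single_apply]
    by_cases h1 : i = j
    · subst h1
      rw [hdiag]
      rw [if_pos rfl, if_neg (fun h => (hfne _) h.symm)]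
      simp
    · by_cases h2 : i = f j
      · rw [if_neg h1, if_pos h2, zmod2_ne_zero ((hfsupp j i).2 (Or.inr h2))]
        simp
      · rw [if_neg h1, if_neg h2]
        have : ¬ (W i j ≠ 0) := fun h => by
          rcases (hfsupp j i).1 h with h' | h' <;> [exact h1 h'; exact h2 h']
        push_neg at this
        simpa using this
  set G : SimpleGraph (Fin n) := SimpleGraph.fromRel (fun u v => f u = v) with hG
  set Sp := Submodule.span (ZMod 2) (Set.range W.transpose) with hSp
  have hself : ∀ x : Fin n → ZMod 2, x + x = 0 := fun x => by
    funext i; exact CharTwo.add_self_eq_zero _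
  have hchar2 : ∀ (x y z : Fin n → ZMod 2), x + z = (x + y) + (y + z) := by
    intro x y z
    rw [show (x + y) + (y + z) = x + (y + y) + z by abel, hself, add_zero]
  have hedge : ∀ u v : Fin n, G.Adj u v →
      (Pi.single u 1 + Pi.single v 1 : Fin n → ZMod 2) ∈ Sp := by
    intro u v huv
    rw [hG, SimpleGraph.fromRel_adj] at huv
    obtain ⟨hne', h | h⟩ := huv
    · have h2 : (Pi.single u 1 + Pi.single v 1 : Fin n → ZMod 2) = W.transpose u := by
        rw [hcolid u, h]
      rw [h2]; exact Submodule.subset_span ⟨u, rfl⟩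
    · have h2 : (Pi.single u 1 + Pi.single v 1 : Fin n → ZMod 2) = W.transpose v := by
        rw [hcolid v, h, add_comm]
      rw [h2]; exact Submodule.subset_span ⟨v, rfl⟩
  have hpair : ∀ u v : Fin n, G.Reachable u v →
      (Pi.single u 1 + Pi.single v 1 : Fin n → ZMod 2) ∈ Sp := by
    intro u v huv
    obtain ⟨w⟩ := huv
    induction w with
    | nil =>
      rw [hself]
      exact Submodule.zero_mem _
    | @cons a b c hab w ih =>
      rw [hchar2 (Pi.single a 1) (Pi.single b 1) (Pi.single c 1)]
      exact Submodule.add_mem _ (hedge a b hab) ih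
  -- even subsets of a component are in the span
  have hstepB : ∀ E : Finset (Fin n), Even E.card →
      (∀ u ∈ E, ∀ v ∈ E, G.Reachable u v) →
      (∑ i ∈ E, Pi.single i (1 : ZMod 2)) ∈ Sp := by
    intro E
    induction E using Finset.strongInduction with
    | _ E ih =>
      intro hE hreach
      rcases Finset.eq_empty_or_nonempty E with rfl | ⟨u, hu⟩
      · simp
      · have h2 : 2 ≤ E.card := by
          obtain ⟨k, hk⟩ := hE
          have : 0 < E.card := Finset.card_pos.2 ⟨u, hu⟩
          omega
        have hv' : (E.erase u).Nonempty := by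
          rw [← Finset.card_pos, Finset.card_erase_of_mem hu]; omega
        obtain ⟨v, hv⟩ := hv'
        have hvu : v ≠ u := Finset.ne_of_mem_erase hv
        have hvE : v ∈ E := Finset.mem_of_mem_erase hv
        set E' := (E.erase u).erase v with hE'
        have hE'sub : E' ⊆ E := fun a ha =>
          Finset.mem_of_mem_erase (Finset.mem_of_mem_erase ha)
        have hunm : u ∉ E' := fun h =>
          (Finset.notMem_erase u _) (Finset.mem_of_mem_erase h)
        have hvnm : v ∉ E' := Finset.notMem_erase v _
        have hE'ss : E' ⊂ E := Finset.ssubset_iff_of_subset hE'sub |>.2 ⟨u, hu, hunm⟩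
        have hcard : E'.card = E.card - 2 := by
          rw [hE', Finset.card_erase_of_mem hv, Finset.card_erase_of_mem hu]
          omega
        have hsplit : E = insert u (insert v E') := by
          rw [hE', Finset.insert_erase hv, Finset.insert_erase hu]
        have hsum : (∑ i ∈ E, Pi.single i (1 : ZMod 2)) =
            (Pi.single u 1 + Pi.single v 1) + ∑ i ∈ E', Pi.single i 1 := by
          rw [hsplit, Finset.sum_insert (by simp [hvu.symm, hunm]),
            Finset.sum_insert hvnm, add_assoc]
        rw [hsum]
        refine Submodule.add_mem _ (hpair u v (hreach u hu v hvE)) (ih E' hE'ss ?_ ?_)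
        · obtain ⟨k, hk⟩ := hE
          exact ⟨k - 1, by omega⟩
        · intro a ha b hb
          exact hreach a (hE'sub ha) b (hE'sub hb)
  haveI : Fintype G.ConnectedComponent := Fintype.ofFinite _
  set mk : Fin n → G.ConnectedComponent := G.connectedComponentMk with hmk
  set S : G.ConnectedComponent → Finset (Fin n) :=
    fun c => univ.filter (fun i => mk i = c) with hS
  set Tc : G.ConnectedComponent → Finset (Fin n) := fun c =>
    if h : Odd (S c).card ∧ (S c).Nonempty then (S c).erase ((S c).min' h.2)
    else S c with hTc
  have hTsub : ∀ c, Tc c ⊆ S c := by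
    intro c
    simp only [hTc]
    split_ifs with h
    · exact Finset.erase_subset _ _
    · exact Finset.Subset.refl _
  have hTcard : ∀ c, (Tc c).card = 2 * ((S c).card / 2) := by
    intro c
    simp only [hTc]
    split_ifs with h
    · rw [Finset.card_erase_of_mem (Finset.min'_mem _ _)]
      obtain ⟨k, hk⟩ := h.1
      omega
    · rcases Nat.even_or_odd (S c).card with he | ho
      · obtain ⟨k, hk⟩ := he; omega
      · exfalso
        exact h ⟨ho, Finset.card_pos.1 (by rcases ho with ⟨k, hk⟩; omega)⟩
  have hmemmk : ∀ c i, i ∈ S c → mk i = c := by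
    intro c i hi
    rw [hS] at hi
    simpa using hi
  set T : Finset (Fin n) := univ.filter (fun i => i ∈ Tc (mk i)) with hT
  have hTfiber : ∀ c, T.filter (fun i => mk i = c) = Tc c := by
    intro c
    ext i
    simp only [hT, mem_filter, mem_univ, true_and]
    constructor
    · rintro ⟨hi, rfl⟩; exact hi
    · intro hi
      have hmkc : mk i = c := hmemmk c i (hTsub c hi)
      exact ⟨by rw [hmkc]; exact hi, hmkc⟩
  set y : (Fin n → ZMod 2) := ∑ i ∈ T, Pi.single i 1 with hy
  have hyS : y ∈ Sp := by
    rw [hy, ← Finset.sum_fiberwise_of_maps_to (fun i _ => mem_univ (mk i))]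
    apply Submodule.sum_mem
    intro c _
    rw [hTfiber c]
    apply hstepB _ (by rw [hTcard c]; exact even_two_mul _)
    intro a ha b hb
    exact SimpleGraph.ConnectedComponent.exact
      ((hmemmk c a (hTsub c ha)).trans (hmemmk c b (hTsub c hb)).symm)
  have hyval : ∀ i, y i = if i ∈ T then 1 else 0 := by
    intro i
    rw [hy, Finset.sum_apply]
    simp only [Pi.single_apply]
    exact Finset.sum_ite_eq T i (fun _ => 1)
  have hynorm : hammingNorm y = T.card := by
    show (univ.filter fun i => y i ≠ 0).card = T.card
    congr 1
    ext i
    simp only [mem_filter, mem_univ, true_and, hyval i]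
    split_ifs with h <;> simp [h]
  have hcardT : T.card = ∑ c, (Tc c).card := by
    rw [Finset.card_eq_sum_card_fiberwise (fun i _ => mem_univ (mk i))]
    exact Finset.sum_congr rfl fun c _ => by rw [hTfiber c]
  have hScard2 : ∀ c, 2 ≤ (S c).card := by
    intro c
    obtain ⟨u, hu⟩ := c.exists_rep
    have hadj : G.Adj u (f u) := by
      rw [hG, SimpleGraph.fromRel_adj]
      exact ⟨(hfne u).symm, Or.inl rfl⟩
    have h1 : u ∈ S c := by
      rw [hS]; simp only [mem_filter, mem_univ, true_and, hmk]; exact hu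
    have h2 : f u ∈ S c := by
      rw [hS]; simp only [mem_filter, mem_univ, true_and, hmk]
      rw [← SimpleGraph.ConnectedComponent.sound hadj.reachable]
      exact hu
    calc 2 = ({u, f u} : Finset (Fin n)).card := (Finset.card_pair (hfne u).symm).symm
      _ ≤ (S c).card := Finset.card_le_card (by
        intro a ha
        rcases Finset.mem_insert.1 ha with rfl | ha
        · exact h1
        · rw [Finset.mem_singleton.1 ha]; exact h2)
  have hsumS : (∑ c, (S c).card) = n := by
    have := Finset.card_eq_sum_card_fiberwise
      (fun (i : Fin n) (_ : i ∈ univ) => mem_univ (mk i))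
    rw [Finset.card_univ, Fintype.card_fin] at this
    rw [← this]
  set m : ℕ := ∑ c, ((S c).card / 2) with hm
  have hkey : n ≤ 3 * m := by
    rw [← hsumS, hm, Finset.mul_sum]
    apply Finset.sum_le_sum
    intro c _
    have := hScard2 c
    omega
  have hTm : T.card = 2 * m := by
    rw [hcardT, hm, Finset.mul_sum]
    exact Finset.sum_congr rfl fun c _ => hTcard c
  obtain ⟨x, hx⟩ : ∃ x, W.mulVec x = y := by
    have : y ∈ LinearMap.range W.mulVecLin := by
      rw [Matrix.range_mulVecLin]; exact hyS
    obtain ⟨x, hx⟩ := this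
    exact ⟨x, hx⟩
  calc 2 * ((n + 2) / 3) ≤ 2 * m := by omega
    _ = T.card := hTm.symm
    _ = hammingNorm y := hynorm.symm
    _ = hammingNorm (W.mulVec x) := by rw [hx]
    _ ≤ _ := Finset.le_sup (f := fun x : Fin n → ZMod 2 => hammingNorm (W.mulVec x)) (mem_univ x)

end lower

/-- `μ*(n,m)`: minimum over matrices with unit diagonal and column weights
exactly `m` of `max_x |W·x|`. -/
noncomputable def muStar (n m : ℕ) : ℕ :=
  sInf {k : ℕ | ∃ W : Matrix (Fin n) (Fin n) (ZMod 2),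
    (∀ i, W i i = 1) ∧ (∀ j, hammingNorm (fun i => W i j) = m) ∧
    k = Finset.univ.sup fun x : Fin n → ZMod 2 => hammingNorm (W.mulVec x)}

/-- `μ*(n,2) = 2⌈n/3⌉`. -/
theorem muStar_n_two (n : ℕ) (hn : 2 ≤ n) : muStar n 2 = 2 * ((n + 2) / 3) := by
  obtain ⟨W, h1, h2, h3⟩ := upper_bound hn
  have hmem : (Finset.univ.sup fun x : Fin n → ZMod 2 => hammingNorm (W.mulVec x)) ∈
      {k : ℕ | ∃ W : Matrix (Fin n) (Fin n) (ZMod 2),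
        (∀ i, W i i = 1) ∧ (∀ j, hammingNorm (fun i => W i j) = 2) ∧
        k = Finset.univ.sup fun x : Fin n → ZMod 2 => hammingNorm (W.mulVec x)} :=
    ⟨W, h1, h2, rfl⟩
  apply le_antisymm
  · refine (Nat.sInf_le hmem).trans ?_
    exact Finset.sup_le fun x _ => h3 x
  · apply le_csInf ⟨_, hmem⟩
    rintro k ⟨W', hd', hc', rfl⟩
    exact lower_bound (by omega) W' hd' hc'
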